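/- Existence of a Byzantine-resilient decoder: let F be a field, L, B positive naturals, N = L + 4B, and let f_1, …, f_L, α_1, …, α_N ∈ F be N + L pairwise distinct elements. Define φ : F^(L+2B) → F^N by φ(x)_n = Σ_{ℓ=1}^L x_ℓ·(f_ℓ − α_n)⁻¹ + Σ_{k=1}^{2B} x_{L+k}·α_n^{k−1}. Then there exists a function D : F^N → F^(L+2B) such that for every x ∈ F^(L+2B) and every Δ ∈ F^N with at most B nonzero coordinates, D(φ(x) + Δ) = x. -/

import Mathlib

/-- The CSA (cross-subspace alignment) encoding map `φ : F^(L+2B) → F^N`, `N = L + 4B`: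
`φ(x)_n = Σ_{ℓ} x_ℓ (f_ℓ - α_n)⁻¹ + Σ_{k} x_{L+k} α_n^(k-1)`. -/
def csaEnc {F : Type*} [Field F] {L B : ℕ} (f : Fin L → F) (α : Fin (L + 4*B) → F)
    (x : Fin L ⊕ Fin (2*B) → F) (n : Fin (L + 4*B)) : F :=
  ∑ ℓ : Fin L, x (Sum.inl ℓ) * (f ℓ - α n)⁻¹ +
  ∑ k : Fin (2*B), x (Sum.inr k) * α n ^ (k : ℕ)

open Polynomial Finset

lemma csa_sub {F : Type*} [Field F] {L B : ℕ} (f : Fin L → F) (α : Fin (L + 4*B) → F)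
    (x x' : Fin L ⊕ Fin (2*B) → F) (n : Fin (L + 4*B)) :
    csaEnc f α (x - x') n = csaEnc f α x n - csaEnc f α x' n := by
  simp only [csaEnc, Pi.sub_apply, sub_mul, Finset.sum_sub_distrib]
  ring

lemma csa_key {F : Type*} [Field F] {L B : ℕ} (hB : 0 < B)
    (f : Fin L → F) (α : Fin (L + 4*B) → F)
    (hdist : Function.Injective (Sum.elim f α))
    (y : Fin L ⊕ Fin (2*B) → F) (S : Finset (Fin (L + 4*B)))
    (hS : L + 2*B ≤ S.card)
    (h0 : ∀ n ∈ S, csaEnc f α y n = 0) : y = 0 := by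
  classical
  have hfα : ∀ ℓ n, f ℓ ≠ α n := by
    intro ℓ n h
    have := hdist (show Sum.elim f α (.inl ℓ) = Sum.elim f α (.inr n) from h)
    simp at this
  have hf : Function.Injective f := fun a b h => by
    have := hdist (show Sum.elim f α (.inl a) = Sum.elim f α (.inl b) from h); simpa using this
  have hα : Function.Injective α := fun a b h => by
    have := hdist (show Sum.elim f α (.inr a) = Sum.elim f α (.inr b) from h); simpa using this
  set P : F[X] := ∏ j : Fin L, (C (f j) - X) with hP
  set g : F[X] := ∑ k : Fin (2*B), C (y (Sum.inr k)) * X ^ (k : ℕ) with hg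
  set Q : F[X] :=
    (∑ ℓ : Fin L, C (y (Sum.inl ℓ)) * ∏ j ∈ univ.erase ℓ, (C (f j) - X)) + g * P with hQ
  have hdeg1 : ∀ j : Fin L, (C (f j) - X).natDegree = 1 := by
    intro j
    rw [show C (f j) - X = -(X - C (f j)) by ring, natDegree_neg, natDegree_X_sub_C]
  have hPeval : ∀ a : F, P.eval a = ∏ j : Fin L, (f j - a) := by
    intro a; simp [hP, eval_prod]
  have hQeval : ∀ n, Q.eval (α n) = P.eval (α n) * csaEnc f α y n := by
    intro n
    have hne : ∀ j : Fin L, f j - α n ≠ 0 := fun j => sub_ne_zero.mpr (hfα j n)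
    rw [hQ, eval_add, eval_mul, eval_finset_sum, csaEnc, mul_add, Finset.mul_sum]
    congr 1
    · refine Finset.sum_congr rfl fun ℓ _ => ?_
      rw [eval_mul, eval_C, eval_prod, hPeval, ← Finset.mul_prod_erase _ _ (mem_univ ℓ)]
      simp only [eval_sub, eval_C, eval_X]
      field_simp
      rw [eq_div_iff (hne ℓ)]
    · rw [hg, eval_finset_sum, mul_comm]
      congr 1
      refine Finset.sum_congr rfl fun k _ => ?_
      simp
  have hgdeg : g.natDegree ≤ 2*B - 1 := by
    refine natDegree_sum_le_of_forall_le _ _ fun k _ => ?_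
    refine le_trans (natDegree_mul_le) ?_
    simp only [natDegree_C, natDegree_pow, natDegree_X, zero_add, mul_one]
    omega
  have hPdeg : P.natDegree ≤ L := by
    refine le_trans (natDegree_prod_le _ _) ?_
    simp [hdeg1]
  have hQdeg : Q.natDegree < L + 2*B := by
    refine lt_of_le_of_lt (natDegree_add_le _ _) ?_
    refine max_lt ?_ ?_
    · have h1 : (∑ ℓ : Fin L, C (y (Sum.inl ℓ)) *
          ∏ j ∈ univ.erase ℓ, (C (f j) - X)).natDegree ≤ L - 1 := by
        refine natDegree_sum_le_of_forall_le _ _ fun ℓ _ => ?_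
        refine le_trans natDegree_mul_le ?_
        rw [natDegree_C, zero_add]
        refine le_trans (natDegree_prod_le _ _) ?_
        rw [Finset.sum_congr rfl (fun j _ => hdeg1 j), Finset.sum_const, smul_eq_mul, mul_one]
        simp [Finset.card_erase_of_mem]
      omega
    · refine lt_of_le_of_lt natDegree_mul_le ?_
      omega
  have hQ0 : Q = 0 := by
    refine Q.eq_zero_of_natDegree_lt_card_of_eval_eq_zero' (S.image α) ?_ ?_
    · intro a ha
      obtain ⟨n, hn, rfl⟩ := Finset.mem_image.mp ha
      rw [hQeval, h0 n hn, mul_zero]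
    · rw [Finset.card_image_of_injective _ hα]
      exact lt_of_lt_of_le hQdeg hS
  -- y on inl is zero
  have hyl : ∀ ℓ, y (Sum.inl ℓ) = 0 := by
    intro ℓ
    have h1 : Q.eval (f ℓ) = 0 := by rw [hQ0, eval_zero]
    rw [hQ, eval_add, eval_mul, hPeval] at h1
    have hP0 : (∏ j : Fin L, (f j - f ℓ)) = 0 :=
      Finset.prod_eq_zero (mem_univ ℓ) (sub_self _)
    rw [hP0, mul_zero, add_zero, eval_finset_sum] at h1
    have h2 : ∀ j ∈ univ, j ≠ ℓ →
        (C (y (Sum.inl j)) * ∏ i ∈ univ.erase j, (C (f i) - X)).eval (f ℓ) = 0 := by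
      intro j _ hj
      rw [eval_mul, eval_prod]
      refine mul_eq_zero_of_right _ (Finset.prod_eq_zero (Finset.mem_erase.mpr ⟨Ne.symm hj, mem_univ ℓ⟩) ?_)
      simp
    rw [Finset.sum_eq_single ℓ h2 (by simp)] at h1
    rw [eval_mul, eval_C, eval_prod] at h1
    have h3 : (∏ i ∈ univ.erase ℓ, ((C (f i) - X).eval (f ℓ))) ≠ 0 := by
      rw [Finset.prod_ne_zero_iff]
      intro i hi
      simp only [eval_sub, eval_C, eval_X]
      exact sub_ne_zero.mpr (hf.ne (Finset.mem_erase.mp hi).1)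
    exact (mul_eq_zero.mp h1).resolve_right h3
  -- hence Q = g * P, so g * P = 0, P ≠ 0, g = 0
  have hQgP : Q = g * P := by
    rw [hQ]
    have : (∑ ℓ : Fin L, C (y (Sum.inl ℓ)) * ∏ j ∈ univ.erase ℓ, (C (f j) - X)) = 0 := by
      refine Finset.sum_eq_zero fun ℓ _ => ?_
      rw [hyl ℓ, map_zero, zero_mul]
    rw [this, zero_add]
  have hPne : P ≠ 0 := by
    rw [hP, Finset.prod_ne_zero_iff]
    intro j _ h
    have := hdeg1 j
    rw [h, natDegree_zero] at this
    exact absurd this (by norm_num)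
  have hg0 : g = 0 := by
    have := hQgP ▸ hQ0
    rcases mul_eq_zero.mp this with h | h
    · exact h
    · exact absurd h hPne
  have hyr : ∀ k, y (Sum.inr k) = 0 := by
    intro k
    have : g.coeff (k : ℕ) = 0 := by rw [hg0, coeff_zero]
    rw [hg, finset_sum_coeff] at this
    simp only [coeff_C_mul, coeff_X_pow, mul_ite, mul_one, mul_zero, Fin.val_eq_val] at this
    rw [Finset.sum_ite_eq] at this
    simpa using this
  funext z
  cases z with
  | inl ℓ => exact hyl ℓ
  | inr k => exact hyr k

/-- **Existence of a Byzantine-resilient decoder.**  With `N = L + 4B` and the `N + L`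
evaluation points pairwise distinct, there is a decoder `D : F^N → F^(L+2B)` that recovers
`x` from `csaEnc f α x + Δ` for every error vector `Δ` with at most `B` nonzero coordinates. -/
theorem csa_decoder_exists
    (F : Type*) [Field F] [DecidableEq F] (L B : ℕ) (hL : 0 < L) (hB : 0 < B)
    (f : Fin L → F) (α : Fin (L + 4*B) → F)
    (hdist : Function.Injective (Sum.elim f α)) :
    ∃ D : (Fin (L + 4*B) → F) → (Fin L ⊕ Fin (2*B) → F),
      ∀ (x : Fin L ⊕ Fin (2*B) → F) (Δ : Fin (L + 4*B) → F),
        (Finset.univ.filter fun n => Δ n ≠ 0).card ≤ B →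
        D (csaEnc f α x + Δ) = x := by
  classical
  refine ⟨fun r => if h : ∃ x', ∃ Δ' : Fin (L+4*B) → F,
      (Finset.univ.filter fun n => Δ' n ≠ 0).card ≤ B ∧ csaEnc f α x' + Δ' = r
      then h.choose else 0, ?_⟩
  intro x Δ hΔ
  have hex : ∃ x', ∃ Δ' : Fin (L+4*B) → F,
      (Finset.univ.filter fun n => Δ' n ≠ 0).card ≤ B ∧
        csaEnc f α x' + Δ' = csaEnc f α x + Δ := ⟨x, Δ, hΔ, rfl⟩
  simp only [dif_pos hex]
  obtain ⟨Δ', hΔ', heq⟩ := hex.choose_spec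
  set x' := hex.choose with hx'
  -- the "agreement" set
  set S : Finset (Fin (L + 4*B)) :=
    Finset.univ.filter (fun n => Δ n = 0 ∧ Δ' n = 0) with hSdef
  have hScard : L + 2*B ≤ S.card := by
    have hsub : Finset.univ.filter (fun n => ¬(Δ n = 0 ∧ Δ' n = 0)) ⊆
        (Finset.univ.filter fun n => Δ n ≠ 0) ∪ (Finset.univ.filter fun n => Δ' n ≠ 0) := by
      intro n hn
      simp only [Finset.mem_filter, Finset.mem_union, Finset.mem_univ, true_and] at *
      tauto
    have h1 : (Finset.univ.filter (fun n => ¬(Δ n = 0 ∧ Δ' n = 0))).card ≤ 2*B := by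
      refine le_trans (Finset.card_le_card hsub) (le_trans (Finset.card_union_le _ _) ?_)
      calc _ ≤ B + B := add_le_add hΔ hΔ'
        _ ≤ 2*B := by omega
    have h2 := Finset.card_filter_add_card_filter_not
      (s := (Finset.univ : Finset (Fin (L + 4*B)))) (p := fun n => Δ n = 0 ∧ Δ' n = 0)
    simp only [Finset.card_univ, Fintype.card_fin] at h2
    have hcs : S.card = (Finset.univ.filter (fun n => Δ n = 0 ∧ Δ' n = 0)).card := by
      rw [hSdef]
    omega
  have hzero : ∀ n ∈ S, csaEnc f α (x' - x) n = 0 := by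
    intro n hn
    rw [hSdef, Finset.mem_filter] at hn
    obtain ⟨-, h1, h2⟩ := hn
    have := congrFun heq n
    simp only [Pi.add_apply, h1, h2, add_zero] at this
    rw [csa_sub, this, sub_self]
  have := csa_key hB f α hdist (x' - x) S hScard hzero
  have : x' = x := by
    have h := sub_eq_zero.mp this
    exact h
  exact this
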